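/- Among all ranked lists of length K with exactly m relevant items (1 ≤ m ≤ K), average precision is minimized when the relevant items occupy the last m positions, and then AP = (1/m) Σ_{t=1}^{m} t/(K - m + t). -/
import Mathlib

noncomputable def prec (a : ℕ → ℕ) (i : ℕ) : ℚ :=
  (∑ j ∈ Finset.Icc 1 i, (a j : ℚ)) / i

noncomputable def AP (a : ℕ → ℕ) (K : ℕ) : ℚ :=
  (∑ i ∈ Finset.Icc 1 K, (a i : ℚ) * prec a i) / (∑ i ∈ Finset.Icc 1 K, (a i : ℚ))

open Finset

lemma sum_a_eq_card {a : ℕ → ℕ} (hbin : ∀ i, a i ≤ 1) (s : Finset ℕ) :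
    ∑ j ∈ s, a j = (s.filter fun j => a j = 1).card := by
  rw [Finset.card_filter]
  refine Finset.sum_congr rfl fun j _ => ?_
  rcases Nat.le_one_iff_eq_zero_or_eq_one.mp (hbin j) with h | h <;> simp [h]

theorem stmt8 (K m : ℕ) (a : ℕ → ℕ) (hbin : ∀ i, a i ≤ 1)
    (hm : ∑ i ∈ Finset.Icc 1 K, a i = m) (hm1 : 1 ≤ m) (hmK : m ≤ K) :
    (1 / (m : ℚ)) * ∑ t ∈ Finset.Icc 1 m, (t : ℚ) / ((K - m + t : ℕ) : ℚ) ≤ AP a K ∧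
    ((∀ i ∈ Finset.Icc 1 K, (a i = 1 ↔ K - m < i)) →
      AP a K = (1 / (m : ℚ)) * ∑ t ∈ Finset.Icc 1 m, (t : ℚ) / ((K - m + t : ℕ) : ℚ)) := by
  classical
  set T : Finset ℕ := (Finset.Icc 1 K).filter (fun i => a i = 1) with hTdef
  have hTcard : T.card = m := by
    rw [← sum_a_eq_card hbin, hm]
  set f : Fin m ↪o ℕ := T.orderEmbOfFin hTcard with hfdef
  have hmemT : ∀ s, f s ∈ T := fun s => T.orderEmbOfFin_mem hTcard s
  have hfIcc : ∀ s, f s ∈ Finset.Icc 1 K := fun s => (Finset.mem_filter.mp (hmemT s)).1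
  have hfK : ∀ s, f s ≤ K := fun s => (Finset.mem_Icc.mp (hfIcc s)).2
  have hf1 : ∀ s, 1 ≤ f s := fun s => (Finset.mem_Icc.mp (hfIcc s)).1
  have hsurj : ∀ x ∈ T, ∃ r : Fin m, f r = x := by
    intro x hx
    have : x ∈ Set.range f := by
      rw [hfdef, Finset.range_orderEmbOfFin]; exact_mod_cast hx
    exact this
  have hinj : Function.Injective f := f.injective
  -- filter identities
  have hfilter_le : ∀ s : Fin m, T.filter (fun x => x ≤ f s) = (Finset.Iic s).image f := by
    intro s
    ext x
    simp only [Finset.mem_filter, Finset.mem_image, Finset.mem_Iic]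
    constructor
    · rintro ⟨hx, hle⟩
      obtain ⟨r, rfl⟩ := hsurj x hx
      exact ⟨r, f.le_iff_le.mp hle, rfl⟩
    · rintro ⟨r, hr, rfl⟩
      exact ⟨hmemT r, f.monotone hr⟩
  have hfilter_gt : ∀ s : Fin m, T.filter (fun x => f s < x) = (Finset.Ioi s).image f := by
    intro s
    ext x
    simp only [Finset.mem_filter, Finset.mem_image, Finset.mem_Ioi]
    constructor
    · rintro ⟨hx, hlt⟩
      obtain ⟨r, rfl⟩ := hsurj x hx
      exact ⟨r, f.lt_iff_lt.mp hlt, rfl⟩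
    · rintro ⟨r, hr, rfl⟩
      exact ⟨hmemT r, f.strictMono hr⟩
  have hcard_le : ∀ s : Fin m, (T.filter (fun x => x ≤ f s)).card = (s : ℕ) + 1 := by
    intro s
    rw [hfilter_le s, Finset.card_image_of_injective _ hinj, Fin.card_Iic]
  have hcard_gt : ∀ s : Fin m, (T.filter (fun x => f s < x)).card = m - 1 - (s : ℕ) := by
    intro s
    rw [hfilter_gt s, Finset.card_image_of_injective _ hinj, Fin.card_Ioi]
  -- bounds on f s
  have hlow : ∀ s : Fin m, (s : ℕ) + 1 ≤ f s := by
    intro s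
    have hsub : T.filter (fun x => x ≤ f s) ⊆ Finset.Icc 1 (f s) := by
      intro x hx
      rw [Finset.mem_filter] at hx
      exact Finset.mem_Icc.mpr ⟨(Finset.mem_Icc.mp ((Finset.mem_filter.mp hx.1).1)).1, hx.2⟩
    have := Finset.card_le_card hsub
    rwa [hcard_le s, Nat.card_Icc, Nat.add_sub_cancel] at this
  have hhigh : ∀ s : Fin m, f s ≤ K - m + (s : ℕ) + 1 := by
    intro s
    have hsub : T.filter (fun x => f s < x) ⊆ Finset.Icc (f s + 1) K := by
      intro x hx
      rw [Finset.mem_filter] at hx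
      exact Finset.mem_Icc.mpr ⟨hx.2, (Finset.mem_Icc.mp ((Finset.mem_filter.mp hx.1).1)).2⟩
    have h2 := Finset.card_le_card hsub
    rw [hcard_gt s, Nat.card_Icc] at h2
    have hsK := hfK s
    have hsm : (s : ℕ) < m := s.isLt
    omega
  -- precision at relevant positions
  have hprec : ∀ s : Fin m, prec a (f s) = ((s : ℚ) + 1) / (f s) := by
    intro s
    have hset : (Finset.Icc 1 (f s)).filter (fun j => a j = 1) = T.filter (fun x => x ≤ f s) := by
      ext x
      simp only [Finset.mem_filter, Finset.mem_Icc, hTdef]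
      have := hfK s
      constructor
      · rintro ⟨⟨h1, h2⟩, h3⟩; exact ⟨⟨⟨h1, le_trans h2 this⟩, h3⟩, h2⟩
      · rintro ⟨⟨⟨h1, h2⟩, h3⟩, h4⟩; exact ⟨⟨h1, h4⟩, h3⟩
    have hnum : ∑ j ∈ Finset.Icc 1 (f s), (a j : ℚ) = (s : ℚ) + 1 := by
      rw [← Nat.cast_sum, sum_a_eq_card hbin, hset, hcard_le s]
      push_cast; ring
    rw [prec, hnum]
  -- numerator rewrite
  have hTimg : T = Finset.univ.image f := by
    ext x
    simp only [Finset.mem_image, Finset.mem_univ, true_and]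
    constructor
    · intro hx; exact hsurj x hx
    · rintro ⟨r, rfl⟩; exact hmemT r
  have hnum : ∑ i ∈ Finset.Icc 1 K, (a i : ℚ) * prec a i
      = ∑ s : Fin m, ((s : ℚ) + 1) / (f s) := by
    have h1 : ∑ i ∈ Finset.Icc 1 K, (a i : ℚ) * prec a i = ∑ i ∈ T, prec a i := by
      rw [hTdef, Finset.sum_filter]
      refine Finset.sum_congr rfl fun i _ => ?_
      rcases Nat.le_one_iff_eq_zero_or_eq_one.mp (hbin i) with h | h <;> simp [h]
    rw [h1, hTimg, Finset.sum_image (fun x _ y _ h => hinj h)]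
    exact Finset.sum_congr rfl fun s _ => hprec s
  have hden : ∑ i ∈ Finset.Icc 1 K, (a i : ℚ) = (m : ℚ) := by
    rw [← Nat.cast_sum, hm]
  have hAP : AP a K = (∑ s : Fin m, ((s : ℚ) + 1) / (f s)) / m := by
    rw [AP, hnum, hden]
  -- rewrite the target sum
  have htarget : ∑ t ∈ Finset.Icc 1 m, (t : ℚ) / ((K - m + t : ℕ) : ℚ)
      = ∑ s : Fin m, ((s : ℚ) + 1) / ((K - m + (s : ℕ) + 1 : ℕ) : ℚ) := by
    rw [show Finset.Icc 1 m = Finset.Ico 1 (m + 1) by rfl, Finset.sum_Ico_eq_sum_range,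
      Fin.sum_univ_eq_sum_range (fun s => ((s : ℚ) + 1) / ((K - m + s + 1 : ℕ) : ℚ))]
    simp only [Nat.add_sub_cancel]
    refine Finset.sum_congr rfl fun i _ => ?_
    have h1 : K - m + (1 + i) = K - m + i + 1 := by omega
    rw [h1]
    push_cast
    ring_nf
  have hm0 : (0 : ℚ) < (m : ℚ) := by exact_mod_cast hm1
  constructor
  · -- lower bound
    rw [hAP, htarget, one_div, inv_mul_eq_div]
    gcongr with s hs
    · have hfs0 : (0 : ℚ) < (f s : ℚ) := by exact_mod_cast hf1 s
      exact hfs0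
    · exact_mod_cast hhigh s
  · -- equality case
    intro h
    have hfeq : ∀ s : Fin m, f s = K - m + (s : ℕ) + 1 := by
      have hmono : StrictMono (fun s : Fin m => K - m + (s : ℕ) + 1) := by
        intro x y hxy
        simp only []
        omega
      have hfs : ∀ s : Fin m, K - m + (s : ℕ) + 1 ∈ T := by
        intro s
        have hsm : (s : ℕ) < m := s.isLt
        have hmem : K - m + (s : ℕ) + 1 ∈ Finset.Icc 1 K := Finset.mem_Icc.mpr ⟨by omega, by omega⟩
        exact Finset.mem_filter.mpr ⟨hmem, (h _ hmem).mpr (by omega)⟩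
      have := Finset.orderEmbOfFin_unique hTcard hfs hmono
      intro s
      rw [hfdef, ← this]
    rw [hAP, htarget, one_div, inv_mul_eq_div]
    congr 1
    exact Finset.sum_congr rfl fun s _ => by rw [hfeq s]
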